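/- Let v^1, ..., v^N be sub-probability couplings of probability measures p̂^i and p^i over relations R^i ⊆ X̂^i × X^i with respect to δ^i, respectively. Then the product measure v = ∏_i v^i (viewed as a measure on (∏_i X̂^i) × (∏_i X^i)) is a sub-probability coupling of p̂ = ∏_i p̂^i and p = ∏_i p^i over the product relation R = {(x̂, x) : (x̂^i, x^i) ∈ R^i for all i} with respect to δ = 1 − ∏_i (1 − δ^i). -/

import Mathlib

open MeasureTheory
open scoped ENNReal

/-- Monotonicity of the finite product measure. -/
lemma measure_pi_mono' {ι : Type*} [Fintype ι] {α : ι → Type*} [∀ i, MeasurableSpace (α i)]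
    {μ ν : ∀ i, Measure (α i)} [∀ i, SigmaFinite (μ i)] [∀ i, SigmaFinite (ν i)]
    (h : ∀ i, μ i ≤ ν i) : Measure.pi μ ≤ Measure.pi ν := by
  have h1 : (Measure.pi μ).toOuterMeasure ≤
      OuterMeasure.pi (fun i => (ν i).toOuterMeasure) := by
    rw [MeasureTheory.OuterMeasure.le_pi]
    intro t _
    calc (Measure.pi μ).toOuterMeasure (Set.pi Set.univ t)
        = Measure.pi μ (Set.pi Set.univ t) := rfl
      _ = ∏ i, μ i (t i) := Measure.pi_pi μ t
      _ ≤ ∏ i, ν i (t i) :=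
        Finset.prod_le_prod' fun i _ => Measure.le_iff'.mp (h i) (t i)
  refine Measure.le_iff.mpr fun s hs => ?_
  calc Measure.pi μ s = (Measure.pi μ).toOuterMeasure s := rfl
    _ ≤ OuterMeasure.pi (fun i => (ν i).toOuterMeasure) s := h1 s
    _ = Measure.pi ν s := by
        rw [Measure.pi_def, toMeasure_apply _ _ hs]

/-- The product of sub-probability couplings is a sub-probability coupling of the
product measures over the product relation, with deficiency `1 - ∏ (1 - δ i)`. -/
theorem prod_subProbCoupling {N : ℕ} {Xh X : Fin N → Type*}
    [∀ i, MeasurableSpace (Xh i)] [∀ i, MeasurableSpace (X i)]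
    (ph : ∀ i, Measure (Xh i)) (p : ∀ i, Measure (X i))
    [∀ i, IsProbabilityMeasure (ph i)] [∀ i, IsProbabilityMeasure (p i)]
    (R : ∀ i, Set (Xh i × X i)) (hR : ∀ i, MeasurableSet (R i))
    (v : ∀ i, Measure (Xh i × X i)) (δ : Fin N → ℝ≥0∞) (hδ : ∀ i, δ i ≤ 1)
    (hsub : ∀ i, v i Set.univ ≤ 1)
    (hmass : ∀ i, 1 - δ i ≤ v i Set.univ)
    (hconc : ∀ i, v i Set.univ = v i (R i))
    (hmarg1 : ∀ i, ∀ A : Set (Xh i), MeasurableSet A → v i (A ×ˢ Set.univ) ≤ ph i A)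
    (hmarg2 : ∀ i, ∀ B : Set (X i), MeasurableSet B → v i (Set.univ ×ˢ B) ≤ p i B) :
    let e : (∀ i, Xh i × X i) → (∀ i, Xh i) × (∀ i, X i) :=
      fun f => (fun i => (f i).1, fun i => (f i).2)
    let V : Measure ((∀ i, Xh i) × (∀ i, X i)) := Measure.map e (Measure.pi v)
    let Rprod : Set ((∀ i, Xh i) × (∀ i, X i)) := {q | ∀ i, (q.1 i, q.2 i) ∈ R i}
    V Set.univ ≤ 1 ∧
    1 - (1 - ∏ i, (1 - δ i)) ≤ V Set.univ ∧
    V Set.univ = V Rprod ∧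
    (∀ A : Set (∀ i, Xh i), MeasurableSet A → V (A ×ˢ Set.univ) ≤ Measure.pi ph A) ∧
    (∀ B : Set (∀ i, X i), MeasurableSet B → V (Set.univ ×ˢ B) ≤ Measure.pi p B) := by
  haveI : ∀ i, IsFiniteMeasure (v i) :=
    fun i => ⟨lt_of_le_of_lt (hsub i) ENNReal.one_lt_top⟩
  intro e V Rprod
  have hg1 : Measurable fun (f : ∀ i, Xh i × X i) (i : Fin N) => (f i).1 :=
    measurable_pi_lambda _ fun i => measurable_fst.comp (measurable_pi_apply i)
  have hg2 : Measurable fun (f : ∀ i, Xh i × X i) (i : Fin N) => (f i).2 :=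
    measurable_pi_lambda _ fun i => measurable_snd.comp (measurable_pi_apply i)
  have he : Measurable e := hg1.prodMk hg2
  have hVuniv : V Set.univ = ∏ i, v i Set.univ := by
    rw [Measure.map_apply he MeasurableSet.univ, Set.preimage_univ, Measure.pi_univ]
  refine ⟨?_, ?_, ?_, ?_, ?_⟩
  · rw [hVuniv]
    exact Finset.prod_le_one (fun i _ => zero_le) (fun i _ => hsub i)
  · have hP : (∏ i, (1 - δ i)) ≤ 1 :=
      Finset.prod_le_one (fun i _ => zero_le) (fun i _ => tsub_le_self)
    rw [ENNReal.sub_sub_cancel ENNReal.one_ne_top hP, hVuniv]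
    exact Finset.prod_le_prod' fun i _ => hmass i
  · have hRm : MeasurableSet Rprod := by
      have : Rprod = ⋂ i, (fun q : (∀ i, Xh i) × (∀ i, X i) => (q.1 i, q.2 i)) ⁻¹' R i := by
        ext q; simp [Rprod, Set.mem_iInter]
      rw [this]
      exact MeasurableSet.iInter fun i =>
        (((measurable_pi_apply i).comp measurable_fst).prodMk
          ((measurable_pi_apply i).comp measurable_snd)) (hR i)
    have hpre : e ⁻¹' Rprod = Set.pi Set.univ R := by
      ext f
      simp [e, Rprod, Set.mem_pi]
    rw [hVuniv, Measure.map_apply he hRm, hpre, Measure.pi_pi]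
    exact Finset.prod_congr rfl fun i _ => hconc i
  · intro A hA
    set w : ∀ i, Measure (Xh i) := fun i => Measure.map Prod.fst (v i) with hwdef
    haveI : ∀ i, IsFiniteMeasure (w i) := fun i =>
      ⟨by
        rw [hwdef, Measure.map_apply measurable_fst MeasurableSet.univ]
        exact lt_of_le_of_lt (measure_mono (Set.subset_univ _))
          (lt_of_le_of_lt (hsub i) ENNReal.one_lt_top)⟩
    have hw : ∀ i, w i ≤ ph i := by
      intro i
      refine Measure.le_iff.mpr fun s hs => ?_
      rw [hwdef, Measure.map_apply measurable_fst hs]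
      have h := hmarg1 i s hs
      rwa [show s ×ˢ (Set.univ : Set (X i)) = Prod.fst ⁻¹' s by
        ext x; simp] at h
    have hmp : Measure.map (fun f i => (f i).1) (Measure.pi v) = Measure.pi w :=
      (MeasureTheory.measurePreserving_pi v w fun i =>
        ⟨measurable_fst, rfl⟩).map_eq
    have hpre : e ⁻¹' (A ×ˢ (Set.univ : Set (∀ i, X i)))
        = (fun f (i : Fin N) => (f i).1) ⁻¹' A := by
      ext f; simp [e]
    calc V (A ×ˢ Set.univ)
        = Measure.pi v (e ⁻¹' (A ×ˢ Set.univ)) :=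
          Measure.map_apply he (hA.prod MeasurableSet.univ)
      _ = Measure.map (fun f i => (f i).1) (Measure.pi v) A := by
          rw [hpre, Measure.map_apply hg1 hA]
      _ = Measure.pi w A := by rw [hmp]
      _ ≤ Measure.pi ph A := Measure.le_iff.mp (measure_pi_mono' hw) A hA
  · intro B hB
    set w : ∀ i, Measure (X i) := fun i => Measure.map Prod.snd (v i) with hwdef
    haveI : ∀ i, IsFiniteMeasure (w i) := fun i =>
      ⟨by
        rw [hwdef, Measure.map_apply measurable_snd MeasurableSet.univ]
        exact lt_of_le_of_lt (measure_mono (Set.subset_univ _))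
          (lt_of_le_of_lt (hsub i) ENNReal.one_lt_top)⟩
    have hw : ∀ i, w i ≤ p i := by
      intro i
      refine Measure.le_iff.mpr fun s hs => ?_
      rw [hwdef, Measure.map_apply measurable_snd hs]
      have h := hmarg2 i s hs
      rwa [show (Set.univ : Set (Xh i)) ×ˢ s = Prod.snd ⁻¹' s by
        ext x; simp] at h
    have hmp : Measure.map (fun f i => (f i).2) (Measure.pi v) = Measure.pi w :=
      (MeasureTheory.measurePreserving_pi v w fun i =>
        ⟨measurable_snd, rfl⟩).map_eq
    have hpre : e ⁻¹' ((Set.univ : Set (∀ i, Xh i)) ×ˢ B)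
        = (fun f (i : Fin N) => (f i).2) ⁻¹' B := by
      ext f; simp [e]
    calc V (Set.univ ×ˢ B)
        = Measure.pi v (e ⁻¹' (Set.univ ×ˢ B)) :=
          Measure.map_apply he (MeasurableSet.univ.prod hB)
      _ = Measure.map (fun f i => (f i).2) (Measure.pi v) B := by
          rw [hpre, Measure.map_apply hg2 hB]
      _ = Measure.pi w B := by rw [hmp]
      _ ≤ Measure.pi p B := Measure.le_iff.mp (measure_pi_mono' hw) B hB
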